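/- Let ⟨(a,b),(c,d)⟩ = ad − bc denote the standard symplectic pairing on ℤ², and for v ∈ ℤ² let T_v(x) = x + ⟨v,x⟩·v be the Picard–Lefschetz transvection. If v₁, v₂ ∈ ℤ² are such that the composite T_{v₁} ∘ T_{v₂} has trace 1 (the trace of the monodromy matrix of a type II singular fibre), then ⟨v₁,v₂⟩ = 1 or ⟨v₁,v₂⟩ = −1. In particular, when a type II singular fibre of an elliptic fibration deforms into two type I₁ singular fibres, the intersection pairing of the two vanishing cycles is ±1. -/

import Mathlib

/-- The standard symplectic pairing on `ℤ²`: `⟨(a,b),(c,d)⟩ = ad − bc`. -/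
def symplPair (v w : Fin 2 → ℤ) : ℤ := v 0 * w 1 - v 1 * w 0

/-- The Picard–Lefschetz transvection `T_v`, as a `2 × 2` integer matrix:
it acts by `x ↦ x + ⟨v,x⟩·v`. -/
def transvection (v : Fin 2 → ℤ) : Matrix (Fin 2) (Fin 2) ℤ :=
  1 + Matrix.vecMulVec v ![-(v 1), v 0]

/-- If the composite `T_{v₁} ∘ T_{v₂}` of the two Picard–Lefschetz transvections has
trace `1` (the trace of the monodromy of a type II singular fibre), then the
intersection pairing of the two vanishing cycles is `⟨v₁,v₂⟩ = ±1`. -/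
theorem pairing_eq_pm_one_of_trace_eq_one (v₁ v₂ : Fin 2 → ℤ)
    (h : (transvection v₁ * transvection v₂).trace = 1) :
    symplPair v₁ v₂ = 1 ∨ symplPair v₁ v₂ = -1 := by
  simp only [transvection, Matrix.trace_fin_two, Matrix.mul_apply, Matrix.vecMulVec_apply,
    Matrix.add_apply, Matrix.one_apply, Fin.sum_univ_two] at h
  norm_num at h
  have hp : symplPair v₁ v₂ * symplPair v₁ v₂ = 1 := by
    simp only [symplPair]; ring_nf; ring_nf at h; linarith
  rcases Int.isUnit_iff.mp (IsUnit.of_mul_eq_one _ hp) with h1 | h1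
  · exact Or.inl h1
  · exact Or.inr h1
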